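/- arXiv:2210.06214 — 2 statements merged into one kernel-verified Lean document; each statement's English description precedes it below -/
import Mathlib

section
/- Let t, g, v be positive integers and let K, K' be sets of positive integers. If there exists a t-wise balanced design S(t, K, v), and for every k ∈ K there exists a GDD(t, K', gk) of type g^k, then there exists a GDD(t, K', gv) of type g^v. -/
open Finset

/-- A parallel class on point set `Y`: a collection of blocks that partitions `Y`. -/
def IsParallelClass (Y : Finset ℕ) (P : Finset (Finset ℕ)) : Prop :=
  (∀ b ∈ P, b ⊆ Y) ∧ ∀ y ∈ Y, ∃! b, b ∈ P ∧ y ∈ b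

/-- A block collection `B` on point set `Y` is resolvable if it can be partitioned
into parallel classes of `Y`. -/
def Resolvable (Y : Finset ℕ) (B : Finset (Finset ℕ)) : Prop :=
  ∃ (r : ℕ) (P : Fin r → Finset (Finset ℕ)),
    (∀ i, IsParallelClass Y (P i)) ∧ (∀ i, P i ⊆ B) ∧ ∀ b ∈ B, ∃! i, b ∈ P i

/-- The blocks of the derived design at a point `x`:
`{B \ {x} : x ∈ B, B ∈ B}`. -/
def derivedBlocks (B : Finset (Finset ℕ)) (x : ℕ) : Finset (Finset ℕ) :=
  (B.filter fun b => x ∈ b).image fun b => b.erase x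

/-- A Steiner system S(t, k, v) on point set `X` with block collection `B`. -/
def IsSteiner (t k v : ℕ) (X : Finset ℕ) (B : Finset (Finset ℕ)) : Prop :=
  X.card = v ∧ (∀ b ∈ B, b ⊆ X ∧ b.card = k) ∧
  ∀ T ⊆ X, T.card = t → ∃! b, b ∈ B ∧ T ⊆ b

/-- An RDS(t, k, v): a Steiner system S(t, k, v) whose derived design at every
point is resolvable. -/
def IsRDS (t k v : ℕ) (X : Finset ℕ) (B : Finset (Finset ℕ)) : Prop :=
  IsSteiner t k v X B ∧ ∀ x ∈ X, Resolvable (X.erase x) (derivedBlocks B x)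

/-- Existence of an RDS(t, k, v). -/
def ExistsRDS (t k v : ℕ) : Prop := ∃ X B, IsRDS t k v X B

/-- Existence of an RDSQS(v), i.e. an RDS(3, 4, v). -/
def ExistsRDSQS (v : ℕ) : Prop := ExistsRDS 3 4 v

/-- A Kirkman triple system KTS(v): a resolvable Steiner triple system. -/
def IsKTS (v : ℕ) (X : Finset ℕ) (B : Finset (Finset ℕ)) : Prop :=
  IsSteiner 2 3 v X B ∧ Resolvable X B

/-- Existence of a large set of Kirkman triple systems LKTS(v): a partition of
all 3-element subsets of a v-element set into v - 2 classes, each a KTS(v). -/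
def ExistsLKTS (v : ℕ) : Prop :=
  ∃ (X : Finset ℕ) (C : Fin (v - 2) → Finset (Finset ℕ)),
    X.card = v ∧ (∀ i, IsKTS v X (C i)) ∧
    (∀ T : Finset ℕ, (T ⊆ X ∧ T.card = 3) ↔ ∃ i, T ∈ C i) ∧
    ∀ (T : Finset ℕ) (i j : Fin (v - 2)), T ∈ C i → T ∈ C j → i = j

/-- A t-wise balanced design S(t, K, v) with block sizes from the set `K`. -/
def IsTBD (t : ℕ) (K : Set ℕ) (v : ℕ) (X : Finset ℕ) (B : Finset (Finset ℕ)) : Prop :=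
  X.card = v ∧ (∀ b ∈ B, b ⊆ X ∧ b.card ∈ K) ∧
  ∀ T ⊆ X, T.card = t → ∃! b, b ∈ B ∧ T ⊆ b

/-- A group divisible design GDD(t, K, g*n) of type g^n: `Gs` is a partition of
`X` into `n` groups of size `g`; blocks have sizes in `K`, meet every group in
at most one point, and every t-subset of `X` meeting every group in at most one
point lies in exactly one block. -/
def IsGDD (t : ℕ) (K : Set ℕ) (g n : ℕ) (X : Finset ℕ)
    (Gs Bs : Finset (Finset ℕ)) : Prop :=
  X.card = g * n ∧ Gs.card = n ∧
  (∀ G ∈ Gs, G ⊆ X ∧ G.card = g) ∧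
  (∀ x ∈ X, ∃! G, G ∈ Gs ∧ x ∈ G) ∧
  (∀ b ∈ Bs, b ⊆ X ∧ b.card ∈ K) ∧
  (∀ b ∈ Bs, ∀ G ∈ Gs, (b ∩ G).card ≤ 1) ∧
  ∀ T ⊆ X, T.card = t → (∀ G ∈ Gs, (T ∩ G).card ≤ 1) → ∃! b, b ∈ Bs ∧ T ⊆ b

/-- An RDGDD(t, K, g*n) of type g^n: a GDD whose derived design at every point
(on point set `X \ G`, where `G` is the group of the point) is resolvable. -/
def IsRDGDD (t : ℕ) (K : Set ℕ) (g n : ℕ) (X : Finset ℕ)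
    (Gs Bs : Finset (Finset ℕ)) : Prop :=
  IsGDD t K g n X Gs Bs ∧
  ∀ x ∈ X, ∀ G ∈ Gs, x ∈ G → Resolvable (X \ G) (derivedBlocks Bs x)

/-- An RDSQS*(v): an SQS(v) with v ≡ 1 (mod 3) such that, for every point `x`,
the derived blocks at `x` contain a parallel class `P'` (enumerated by `Bk`);
the multiset consisting of each triple of `P'` three times and each remaining
derived triple twice can be partitioned into (v-1) parallel classes
`P k l` (k ranging over Fin ((v-1)/3), l over Fin 3); and for each `k` the three
parallel classes `P k l` share the common triple `Bk k`. -/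
def IsRDSQSstar (v : ℕ) (X : Finset ℕ) (B : Finset (Finset ℕ)) : Prop :=
  IsSteiner 3 4 v X B ∧ v % 3 = 1 ∧
  ∀ x ∈ X, ∃ (P' : Finset (Finset ℕ)) (Bk : Fin ((v - 1) / 3) → Finset ℕ)
    (P : Fin ((v - 1) / 3) → Fin 3 → Finset (Finset ℕ)),
    P' ⊆ derivedBlocks B x ∧
    IsParallelClass (X.erase x) P' ∧
    (∀ k, Bk k ∈ P') ∧
    (∀ b ∈ P', ∃ k, Bk k = b) ∧
    Function.Injective Bk ∧
    (∀ k l, IsParallelClass (X.erase x) (P k l)) ∧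
    ((∑ k, ∑ l, (P k l).val) =
        3 • P'.val + 2 • ((derivedBlocks B x) \ P').val) ∧
    ∀ k l, Bk k ∈ P k l

lemma mem_image_iff_injOn {φ : ℕ → ℕ} {Y s : Finset ℕ} (h : Set.InjOn φ ↑Y)
    (hs : s ⊆ Y) {a : ℕ} (ha : a ∈ Y) : φ a ∈ s.image φ ↔ a ∈ s := by
  constructor
  · rintro hm
    obtain ⟨x, hx, hxa⟩ := Finset.mem_image.1 hm
    rwa [h (hs hx) ha hxa] at hx
  · exact fun h' => Finset.mem_image_of_mem _ h'

lemma subset_of_image_subset {φ : ℕ → ℕ} {Y s u : Finset ℕ} (h : Set.InjOn φ ↑Y)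
    (hs : s ⊆ Y) (hu : u ⊆ Y) (him : s.image φ ⊆ u.image φ) : s ⊆ u := by
  intro a ha
  exact (mem_image_iff_injOn h hu (hs ha)).1 (him (Finset.mem_image_of_mem _ ha))

lemma eq_of_image_eq {φ : ℕ → ℕ} {Y s u : Finset ℕ} (h : Set.InjOn φ ↑Y)
    (hs : s ⊆ Y) (hu : u ⊆ Y) (him : s.image φ = u.image φ) : s = u :=
  Finset.Subset.antisymm (subset_of_image_subset h hs hu him.le)
    (subset_of_image_subset h hu hs him.ge)

lemma gdd_image {t : ℕ} {K' : Set ℕ} {g k : ℕ} {Y : Finset ℕ} {Hs Cs : Finset (Finset ℕ)}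
    (hG : IsGDD t K' g k Y Hs Cs) {φ : ℕ → ℕ} (hφ : Set.InjOn φ ↑Y) :
    IsGDD t K' g k (Y.image φ) (Hs.image (Finset.image φ)) (Cs.image (Finset.image φ)) := by
  obtain ⟨hcard, hGcard, hGrp, hPart, hBlk, hInt, hT⟩ := hG
  have hGsub : ∀ G ∈ Hs, G ⊆ Y := fun G h => (hGrp G h).1
  have hBsub : ∀ b ∈ Cs, b ⊆ Y := fun b h => (hBlk b h).1
  have injHs : ∀ s ∈ Hs, ∀ u ∈ Hs, s.image φ = u.image φ → s = u :=
    fun s hs u hu => eq_of_image_eq hφ (hGsub s hs) (hGsub u hu)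
  refine ⟨?_, ?_, ?_, ?_, ?_, ?_, ?_⟩
  · rw [Finset.card_image_of_injOn hφ, hcard]
  · rw [Finset.card_image_of_injOn, hGcard]
    intro s hs u hu
    exact injHs s hs u hu
  · rintro G' hG'
    obtain ⟨G, hGmem, rfl⟩ := Finset.mem_image.1 hG'
    exact ⟨Finset.image_subset_image (hGsub G hGmem),
      by rw [Finset.card_image_of_injOn (hφ.mono (by exact_mod_cast hGsub G hGmem)), (hGrp G hGmem).2]⟩
  · rintro x' hx'
    obtain ⟨x, hx, rfl⟩ := Finset.mem_image.1 hx'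
    obtain ⟨G, ⟨hGmem, hxG⟩, huniq⟩ := hPart x hx
    refine ⟨G.image φ, ⟨Finset.mem_image_of_mem _ hGmem, Finset.mem_image_of_mem _ hxG⟩, ?_⟩
    rintro G' ⟨hG', hxG'⟩
    obtain ⟨G₂, hG₂, rfl⟩ := Finset.mem_image.1 hG'
    have : x ∈ G₂ := (mem_image_iff_injOn hφ (hGsub G₂ hG₂) hx).1 hxG'
    rw [huniq G₂ ⟨hG₂, this⟩]
  · rintro b' hb'
    obtain ⟨b, hb, rfl⟩ := Finset.mem_image.1 hb'
    exact ⟨Finset.image_subset_image (hBsub b hb),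
      by rw [Finset.card_image_of_injOn (hφ.mono (by exact_mod_cast hBsub b hb))]; exact (hBlk b hb).2⟩
  · rintro b' hb' G' hG'
    obtain ⟨b, hb, rfl⟩ := Finset.mem_image.1 hb'
    obtain ⟨G, hGmem, rfl⟩ := Finset.mem_image.1 hG'
    calc (b.image φ ∩ G.image φ).card ≤ ((b ∩ G).image φ).card := by
          apply Finset.card_le_card
          intro a ha
          obtain ⟨ha1, ha2⟩ := Finset.mem_inter.1 ha
          obtain ⟨x, hx, rfl⟩ := Finset.mem_image.1 ha1
          have : x ∈ G := (mem_image_iff_injOn hφ (hGsub G hGmem) (hBsub b hb hx)).1 ha2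
          exact Finset.mem_image_of_mem _ (Finset.mem_inter.2 ⟨hx, this⟩)
      _ ≤ (b ∩ G).card := Finset.card_image_le
      _ ≤ 1 := hInt b hb G hGmem
  · rintro T' hT' hTcard hTint
    set S : Finset ℕ := Y.filter (fun y => φ y ∈ T') with hS
    have hSY : S ⊆ Y := Finset.filter_subset _ _
    have hSim : S.image φ = T' := by
      apply Finset.Subset.antisymm
      · intro a ha
        obtain ⟨x, hx, rfl⟩ := Finset.mem_image.1 ha
        exact (Finset.mem_filter.1 hx).2
      · intro a ha
        obtain ⟨x, hx, rfl⟩ := Finset.mem_image.1 (hT' ha)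
        exact Finset.mem_image_of_mem _ (Finset.mem_filter.2 ⟨hx, ha⟩)
    have hScard : S.card = t := by
      rw [← hTcard, ← hSim, Finset.card_image_of_injOn (hφ.mono (by exact_mod_cast hSY))]
    have hSint : ∀ G ∈ Hs, (S ∩ G).card ≤ 1 := by
      intro G hGmem
      have h1 : ((S ∩ G).image φ) ⊆ T' ∩ G.image φ := by
        intro a ha
        obtain ⟨x, hx, rfl⟩ := Finset.mem_image.1 ha
        obtain ⟨hx1, hx2⟩ := Finset.mem_inter.1 hx
        exact Finset.mem_inter.2 ⟨hSim ▸ Finset.mem_image_of_mem _ hx1, Finset.mem_image_of_mem _ hx2⟩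
      calc (S ∩ G).card = ((S ∩ G).image φ).card := by
            rw [Finset.card_image_of_injOn (hφ.mono (by
              intro a ha; exact hSY (Finset.mem_inter.1 ha).1))]
        _ ≤ (T' ∩ G.image φ).card := Finset.card_le_card h1
        _ ≤ 1 := hTint _ (Finset.mem_image_of_mem _ hGmem)
    obtain ⟨c, ⟨hc, hSc⟩, hcu⟩ := hT S hSY hScard hSint
    refine ⟨c.image φ, ⟨Finset.mem_image_of_mem _ hc, hSim ▸ Finset.image_subset_image hSc⟩, ?_⟩
    rintro c' ⟨hc', hTc'⟩
    obtain ⟨c₂, hc₂, rfl⟩ := Finset.mem_image.1 hc'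
    have : S ⊆ c₂ := subset_of_image_subset hφ hSY (hBsub c₂ hc₂) (hSim ▸ hTc')
    rw [hcu c₂ ⟨hc₂, this⟩]

/-- The canonical group on base point `x`. -/
def gp (g x : ℕ) : Finset ℕ := (Finset.range g).image (Nat.pair x)

lemma gdd_relabel {t : ℕ} {K' : Set ℕ} {g k : ℕ} {Y : Finset ℕ} {Hs Cs : Finset (Finset ℕ)}
    (hG : IsGDD t K' g k Y Hs Cs) {b : Finset ℕ} (hb : b.card = k) :
    ∃ Cs', IsGDD t K' g k (b.biUnion (gp g)) (b.image (gp g)) Cs' := by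
  classical
  obtain ⟨hcard, hGcard, hGrp, hPart, hBlk, hInt, hT⟩ := hG
  have hGsub : ∀ G ∈ Hs, G ⊆ Y := fun G h => (hGrp G h).1
  -- equivalences
  have σ : {x // x ∈ Hs} ≃ {x // x ∈ b} := Finset.equivOfCardEq (by rw [hGcard, hb])
  have e : ∀ G : {x // x ∈ Hs}, {y // y ∈ (G : Finset ℕ)} ≃ {y // y ∈ Finset.range g} :=
    fun G => Finset.equivOfCardEq (by rw [(hGrp G G.2).2, Finset.card_range])
  -- the group of a point
  set gfun : ℕ → Finset ℕ := fun y => if h : ∃ G ∈ Hs, y ∈ G then h.choose else ∅ with hgfun_def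
  have hgfun : ∀ {G}, G ∈ Hs → ∀ {y}, y ∈ G → gfun y = G := by
    intro G hGm y hy
    have hex : ∃ G ∈ Hs, y ∈ G := ⟨G, hGm, hy⟩
    have hyY : y ∈ Y := hGsub G hGm hy
    simp only [hgfun_def, dif_pos hex]
    exact (hPart y hyY).unique ⟨hex.choose_spec.1, hex.choose_spec.2⟩ ⟨hGm, hy⟩
  have hgfun_mem : ∀ y ∈ Y, gfun y ∈ Hs ∧ y ∈ gfun y := by
    intro y hy
    obtain ⟨G, ⟨hGm, hyG⟩, -⟩ := hPart y hy
    rw [hgfun hGm hyG]; exact ⟨hGm, hyG⟩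
  -- the base-point of a group
  set bfun : Finset ℕ → ℕ := fun G => if h : G ∈ Hs then (σ ⟨G, h⟩ : ℕ) else 0 with hbfun_def
  have hbfun_mem : ∀ {G}, G ∈ Hs → bfun G ∈ b := by
    intro G h; simp only [hbfun_def, dif_pos h]; exact (σ ⟨G, h⟩).2
  have hbfun_inj : ∀ {G}, G ∈ Hs → ∀ {G'}, G' ∈ Hs → bfun G = bfun G' → G = G' := by
    intro G h G' h' heq
    simp only [hbfun_def, dif_pos h, dif_pos h'] at heq
    have := σ.injective (Subtype.ext heq)
    exact congrArg Subtype.val this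
  have hbfun_surj : ∀ x ∈ b, ∃ G ∈ Hs, bfun G = x := by
    intro x hx
    refine ⟨(σ.symm ⟨x, hx⟩ : Finset ℕ), (σ.symm ⟨x, hx⟩).2, ?_⟩
    simp only [hbfun_def, dif_pos (σ.symm ⟨x, hx⟩).2]
    rw [Subtype.coe_eta, Equiv.apply_symm_apply]
  -- the index of a point within its group
  set ifun : Finset ℕ → ℕ → ℕ := fun G y =>
    if h : G ∈ Hs ∧ y ∈ G then (e ⟨G, h.1⟩ ⟨y, h.2⟩ : ℕ) else 0 with hifun_def
  have hifun_mem : ∀ {G}, G ∈ Hs → ∀ {y}, y ∈ G → ifun G y ∈ Finset.range g := by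
    intro G h y hy
    simp only [hifun_def, dif_pos (⟨h, hy⟩ : G ∈ Hs ∧ y ∈ G)]
    exact (e ⟨G, h⟩ ⟨y, hy⟩).2
  have hifun_inj : ∀ {G}, G ∈ Hs → ∀ {y}, y ∈ G → ∀ {y'}, y' ∈ G →
      ifun G y = ifun G y' → y = y' := by
    intro G h y hy y' hy' heq
    simp only [hifun_def, dif_pos (⟨h, hy⟩ : G ∈ Hs ∧ y ∈ G),
      dif_pos (⟨h, hy'⟩ : G ∈ Hs ∧ y' ∈ G)] at heq
    have := (e ⟨G, h⟩).injective (Subtype.ext heq)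
    exact congrArg Subtype.val this
  have hifun_surj : ∀ {G}, G ∈ Hs → ∀ j ∈ Finset.range g, ∃ y ∈ G, ifun G y = j := by
    intro G h j hj
    refine ⟨((e ⟨G, h⟩).symm ⟨j, hj⟩ : ℕ), ((e ⟨G, h⟩).symm ⟨j, hj⟩).2, ?_⟩
    simp only [hifun_def,
      dif_pos (⟨h, ((e ⟨G, h⟩).symm ⟨j, hj⟩).2⟩ : G ∈ Hs ∧ _ ∈ G)]
    rw [Subtype.coe_eta, Equiv.apply_symm_apply]
  -- the relabeling map
  set φ : ℕ → ℕ := fun y => Nat.pair (bfun (gfun y)) (ifun (gfun y) y) with hφ_def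
  have hφ_eq : ∀ {G}, G ∈ Hs → ∀ {y}, y ∈ G → φ y = Nat.pair (bfun G) (ifun G y) := by
    intro G h y hy; simp only [hφ_def, hgfun h hy]
  have hφinj : Set.InjOn φ ↑Y := by
    intro y₁ h₁ y₂ h₂ heq
    obtain ⟨hm₁, hy₁⟩ := hgfun_mem y₁ h₁
    obtain ⟨hm₂, hy₂⟩ := hgfun_mem y₂ h₂
    rw [hφ_eq hm₁ hy₁, hφ_eq hm₂ hy₂] at heq
    obtain ⟨e1, e2⟩ := Nat.pair_eq_pair.1 heq
    have hGG : gfun y₁ = gfun y₂ := hbfun_inj hm₁ hm₂ e1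
    rw [hGG] at hy₁ e2
    exact hifun_inj hm₂ hy₁ hy₂ e2
  -- image of a group
  have hφ_grp : ∀ {G}, G ∈ Hs → G.image φ = gp g (bfun G) := by
    intro G h
    apply Finset.Subset.antisymm
    · intro a ha
      obtain ⟨y, hy, rfl⟩ := Finset.mem_image.1 ha
      rw [hφ_eq h hy]
      exact Finset.mem_image_of_mem _ (hifun_mem h hy)
    · intro a ha
      obtain ⟨j, hj, rfl⟩ := Finset.mem_image.1 ha
      obtain ⟨y, hy, rfl⟩ := hifun_surj h j hj
      rw [← hφ_eq h hy]
      exact Finset.mem_image_of_mem _ hy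
  -- total images
  have hYim : Y.image φ = b.biUnion (gp g) := by
    apply Finset.Subset.antisymm
    · intro a ha
      obtain ⟨y, hy, rfl⟩ := Finset.mem_image.1 ha
      obtain ⟨hm, hyG⟩ := hgfun_mem y hy
      refine Finset.mem_biUnion.2 ⟨bfun (gfun y), hbfun_mem hm, ?_⟩
      rw [← hφ_grp hm]
      exact Finset.mem_image_of_mem _ hyG
    · intro a ha
      obtain ⟨x, hx, hax⟩ := Finset.mem_biUnion.1 ha
      obtain ⟨G, hGm, rfl⟩ := hbfun_surj x hx
      rw [← hφ_grp hGm] at hax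
      obtain ⟨y, hy, rfl⟩ := Finset.mem_image.1 hax
      exact Finset.mem_image_of_mem _ (hGsub G hGm hy)
  have hGim : Hs.image (Finset.image φ) = b.image (gp g) := by
    apply Finset.Subset.antisymm
    · intro s hs
      obtain ⟨G, hGm, rfl⟩ := Finset.mem_image.1 hs
      rw [hφ_grp hGm]
      exact Finset.mem_image_of_mem _ (hbfun_mem hGm)
    · intro s hs
      obtain ⟨x, hx, rfl⟩ := Finset.mem_image.1 hs
      obtain ⟨G, hGm, rfl⟩ := hbfun_surj x hx
      rw [← hφ_grp hGm]
      exact Finset.mem_image_of_mem _ hGm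
  refine ⟨Cs.image (Finset.image φ), ?_⟩
  have := gdd_image ⟨hcard, hGcard, hGrp, hPart, hBlk, hInt, hT⟩ hφinj
  rwa [hYim, hGim] at this

lemma gp_card {g : ℕ} (x : ℕ) : (gp g x).card = g := by
  rw [gp, Finset.card_image_of_injective _ (fun a b h => (Nat.pair_eq_pair.1 h).2),
    Finset.card_range]

lemma mem_gp {g x a : ℕ} : a ∈ gp g x ↔ ∃ j < g, a = Nat.pair x j := by
  simp [gp, Finset.mem_image, eq_comm]

lemma unpair_fst_of_mem_gp {g x a : ℕ} (h : a ∈ gp g x) : a.unpair.1 = x := by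
  obtain ⟨j, -, rfl⟩ := mem_gp.1 h
  rw [Nat.unpair_pair]

/-- If there is an S(t, K, v), and for every k ∈ K there is a GDD(t, K', gk) of
type g^k, then there is a GDD(t, K', gv) of type g^v. -/
theorem stmt_1 (t g v : ℕ) (K K' : Set ℕ) (ht : 0 < t) (hg : 0 < g) (hv : 0 < v)
    (hK : ∀ k ∈ K, 0 < k) (hK' : ∀ k ∈ K', 0 < k)
    (hS : ∃ X B, IsTBD t K v X B)
    (hGDD : ∀ k ∈ K, ∃ X Gs Bs, IsGDD t K' g k X Gs Bs) :
    ∃ X Gs Bs, IsGDD t K' g v X Gs Bs := by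
  classical
  obtain ⟨X, B, hXcard, hBlk, hTprop⟩ := hS
  -- the chosen relabeled GDD on each block
  set C : Finset ℕ → Finset (Finset ℕ) := fun b =>
    if h : ∃ Cs', IsGDD t K' g b.card (b.biUnion (gp g)) (b.image (gp g)) Cs' then h.choose
    else ∅ with hC_def
  have hC : ∀ b ∈ B, IsGDD t K' g b.card (b.biUnion (gp g)) (b.image (gp g)) (C b) := by
    intro b hb
    obtain ⟨Y, Hs, Cs, hgdd⟩ := hGDD b.card (hBlk b hb).2
    have hex := gdd_relabel hgdd (rfl : b.card = b.card)
    simp only [hC_def, dif_pos hex]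
    exact hex.choose_spec
  refine ⟨X.biUnion (gp g), X.image (gp g), B.biUnion C, ?_, ?_, ?_, ?_, ?_, ?_, ?_⟩
  -- point membership helper
  · -- cardinality
    rw [Finset.card_biUnion, Finset.sum_congr rfl (fun x _ => gp_card x),
      Finset.sum_const, smul_eq_mul, hXcard, mul_comm]
    intro x hx y hy hxy
    rw [Function.onFun, Finset.disjoint_left]
    intro a hax hay
    exact hxy ((unpair_fst_of_mem_gp hax).symm.trans (unpair_fst_of_mem_gp hay))
  · -- number of groups
    rw [Finset.card_image_of_injOn, hXcard]
    intro x hx y hy hxy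
    have : Nat.pair x 0 ∈ gp g y := hxy ▸ mem_gp.2 ⟨0, hg, rfl⟩
    obtain ⟨j, -, hj⟩ := mem_gp.1 this
    exact (Nat.pair_eq_pair.1 hj).1
  · -- groups
    rintro G hG
    obtain ⟨x, hx, rfl⟩ := Finset.mem_image.1 hG
    exact ⟨Finset.subset_biUnion_of_mem (gp g) hx, gp_card x⟩
  · -- partition into groups
    rintro a ha
    obtain ⟨x, hx, hax⟩ := Finset.mem_biUnion.1 ha
    refine ⟨gp g x, ⟨Finset.mem_image_of_mem _ hx, hax⟩, ?_⟩
    rintro G ⟨hG, haG⟩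
    obtain ⟨y, hy, rfl⟩ := Finset.mem_image.1 hG
    rw [(unpair_fst_of_mem_gp haG).symm.trans (unpair_fst_of_mem_gp hax)]
  · -- blocks
    rintro c hc
    obtain ⟨b, hb, hcb⟩ := Finset.mem_biUnion.1 hc
    obtain ⟨hsub, hck⟩ := (hC b hb).2.2.2.2.1 c hcb
    exact ⟨hsub.trans (Finset.biUnion_subset_biUnion_of_subset_left _ (hBlk b hb).1), hck⟩
  · -- blocks meet groups in at most one point
    rintro c hc G hG
    obtain ⟨b, hb, hcb⟩ := Finset.mem_biUnion.1 hc
    obtain ⟨x, hx, rfl⟩ := Finset.mem_image.1 hG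
    by_cases hxb : x ∈ b
    · exact (hC b hb).2.2.2.2.2.1 c hcb (gp g x) (Finset.mem_image_of_mem _ hxb)
    · have : c ∩ gp g x = ∅ := by
        rw [Finset.eq_empty_iff_forall_notMem]
        rintro a ha
        obtain ⟨hac, hagp⟩ := Finset.mem_inter.1 ha
        have hsub := ((hC b hb).2.2.2.2.1 c hcb).1
        obtain ⟨y, hy, hay⟩ := Finset.mem_biUnion.1 (hsub hac)
        exact hxb (((unpair_fst_of_mem_gp hagp).symm.trans (unpair_fst_of_mem_gp hay)) ▸ hy)
      rw [this, Finset.card_empty]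
      exact Nat.zero_le 1
  · -- t-subsets
    rintro T hT hTcard hTint
    have hmem : ∀ a ∈ T, ∃ x ∈ X, a ∈ gp g x := by
      intro a ha
      obtain ⟨x, hx, hax⟩ := Finset.mem_biUnion.1 (hT ha)
      exact ⟨x, hx, hax⟩
    set S : Finset ℕ := T.image (fun a => a.unpair.1) with hS_def
    have hSX : S ⊆ X := by
      intro x hx
      obtain ⟨a, ha, rfl⟩ := Finset.mem_image.1 hx
      obtain ⟨x', hx', hax'⟩ := hmem a ha
      rw [unpair_fst_of_mem_gp hax']; exact hx'
    have hinj : Set.InjOn (fun a : ℕ => a.unpair.1) ↑T := by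
      intro a₁ h₁ a₂ h₂ heq
      obtain ⟨x₁, hx₁, hax₁⟩ := hmem a₁ h₁
      obtain ⟨x₂, hx₂, hax₂⟩ := hmem a₂ h₂
      have e1 : x₁ = x₂ := by
        rw [← unpair_fst_of_mem_gp hax₁, ← unpair_fst_of_mem_gp hax₂]; exact heq
      subst e1
      have hcle := hTint (gp g x₁) (Finset.mem_image_of_mem _ hx₁)
      exact Finset.card_le_one.1 hcle a₁ (Finset.mem_inter.2 ⟨h₁, hax₁⟩)
        a₂ (Finset.mem_inter.2 ⟨h₂, hax₂⟩)
    have hScard : S.card = t := by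
      rw [hS_def, Finset.card_image_of_injOn hinj, hTcard]
    obtain ⟨b, ⟨hb, hSb⟩, hbuniq⟩ := hTprop S hSX hScard
    have hTsub : T ⊆ b.biUnion (gp g) := by
      intro a ha
      obtain ⟨x, hx, hax⟩ := hmem a ha
      refine Finset.mem_biUnion.2 ⟨x, ?_, hax⟩
      exact hSb ((unpair_fst_of_mem_gp hax) ▸ Finset.mem_image_of_mem _ ha)
    have hTint' : ∀ G ∈ b.image (gp g), (T ∩ G).card ≤ 1 := by
      rintro G hG
      obtain ⟨x, hx, rfl⟩ := Finset.mem_image.1 hG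
      exact hTint (gp g x) (Finset.mem_image_of_mem _ ((hBlk b hb).1 hx))
    obtain ⟨c, ⟨hc, hTc⟩, hcuniq⟩ := (hC b hb).2.2.2.2.2.2 T hTsub hTcard hTint'
    refine ⟨c, ⟨Finset.mem_biUnion.2 ⟨b, hb, hc⟩, hTc⟩, ?_⟩
    rintro c' ⟨hc', hTc'⟩
    obtain ⟨b₁, hb₁, hcb₁⟩ := Finset.mem_biUnion.1 hc'
    have hSb₁ : S ⊆ b₁ := by
      intro x hx
      obtain ⟨a, ha, rfl⟩ := Finset.mem_image.1 hx
      have hac : a ∈ b₁.biUnion (gp g) := ((hC b₁ hb₁).2.2.2.2.1 c' hcb₁).1 (hTc' ha)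
      obtain ⟨y, hy, hay⟩ := Finset.mem_biUnion.1 hac
      rw [unpair_fst_of_mem_gp hay]; exact hy
    have hbeq : b₁ = b := hbuniq b₁ ⟨hb₁, hSb₁⟩
    subst hbeq
    exact hcuniq c' ⟨hcb₁, hTc'⟩
end

section
/- There exists an RDTD(3, 4, 4), i.e., a transversal design TD(3, 4, 4) (a GDD(3, 4, 16) of type 4^4) whose derived design at every point is resolvable. -/
open Finset

/-! ### Auxiliary construction: an RDTD(3,4,4) over GF(4) = (Z/2)^2 (xor) -/

def blk (x y z : ℕ) : Finset ℕ := {x, 4+y, 8+z, 12+(x^^^y^^^z)}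

def myBs : Finset (Finset ℕ) :=
  ((Finset.range 4) ×ˢ (Finset.range 4) ×ˢ (Finset.range 4)).image
    fun t => blk t.1 t.2.1 t.2.2

def grp (i : ℕ) : Finset ℕ := {4*i, 4*i+1, 4*i+2, 4*i+3}

def myGs : Finset (Finset ℕ) := (Finset.range 4).image grp

/-- multiplication by a primitive element of GF(4) on {0,1,2,3} -/
def m2 : ℕ → ℕ
  | 0 => 0 | 1 => 2 | 2 => 3 | _ => 1

/-- the three group indices other than `i` -/
def oth (i : ℕ) : ℕ × ℕ × ℕ :=
  if i = 0 then (1,2,3) else if i = 1 then (0,2,3) else if i = 2 then (0,1,3) else (0,1,2)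

/-- parallel class `c` of the derived design at point `p` -/
def pcls (p c : ℕ) : Finset (Finset ℕ) :=
  (Finset.range 4).image fun y =>
    ({4*(oth (p/4)).1 + y, 4*(oth (p/4)).2.1 + (m2 y ^^^ c),
      4*(oth (p/4)).2.2 + ((p % 4) ^^^ y ^^^ m2 y ^^^ c)} : Finset ℕ)

lemma exu_of_filter {α : Type*} [DecidableEq α] {s : Finset α} {p : α → Prop}
    [DecidablePred p] (h : (s.filter p).card = 1) : ∃! a, a ∈ s ∧ p a := by
  obtain ⟨a, ha⟩ := Finset.card_eq_one.mp h
  have ha' := Finset.mem_filter.mp (ha ▸ Finset.mem_singleton_self a)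
  refine ⟨a, ha', fun b hb => ?_⟩
  have hb' : b ∈ s.filter p := Finset.mem_filter.mpr hb
  rw [ha, Finset.mem_singleton] at hb'
  exact hb'

lemma exu_fin4 {p : ℕ → Prop} [DecidablePred p]
    (h : ((Finset.range 4).filter p).card = 1) : ∃! i : Fin 4, p i.val := by
  obtain ⟨a, ⟨hma, hpa⟩, hu⟩ := exu_of_filter h
  refine ⟨⟨a, Finset.mem_range.mp hma⟩, hpa, fun j hj => ?_⟩
  exact Fin.ext (hu j.val ⟨Finset.mem_range.mpr j.isLt, hj⟩)

set_option maxRecDepth 1000000 in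
set_option maxHeartbeats 400000000 in
lemma aux_gdd4 : ∀ x ∈ Finset.range 16, (myGs.filter fun G => x ∈ G).card = 1 := by
  decide

set_option maxRecDepth 1000000 in
set_option maxHeartbeats 400000000 in
lemma aux_gdd7 : ∀ T ∈ (Finset.range 16).powersetCard 3,
    (∀ G ∈ myGs, (T ∩ G).card ≤ 1) →
    (myBs.filter fun b => T ⊆ b).card = 1 := by
  decide

set_option maxRecDepth 1000000 in
set_option maxHeartbeats 400000000 in
lemma aux_grpEq : ∀ x ∈ Finset.range 16, ∀ G ∈ myGs, x ∈ G → G = grp (x/4) := by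
  decide

set_option maxRecDepth 1000000 in
set_option maxHeartbeats 400000000 in
lemma aux_pc : ∀ x ∈ Finset.range 16, ∀ c ∈ Finset.range 4,
    (∀ b ∈ pcls x c, b ⊆ Finset.range 16 \ grp (x/4)) ∧
    (∀ y ∈ Finset.range 16 \ grp (x/4), ((pcls x c).filter fun b => y ∈ b).card = 1) := by
  decide

set_option maxRecDepth 1000000 in
set_option maxHeartbeats 400000000 in
lemma aux_sub : ∀ x ∈ Finset.range 16, ∀ c ∈ Finset.range 4,
    pcls x c ⊆ derivedBlocks myBs x := by
  decide

set_option maxRecDepth 1000000 in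
set_option maxHeartbeats 400000000 in
lemma aux_part : ∀ x ∈ Finset.range 16, ∀ b ∈ derivedBlocks myBs x,
    ((Finset.range 4).filter fun c => b ∈ pcls x c).card = 1 := by
  decide

set_option maxRecDepth 1000000 in
set_option maxHeartbeats 400000000 in
lemma aux_blocks : ∀ b ∈ myBs, b ⊆ Finset.range 16 ∧ b.card = 4 := by
  decide

/-- There exists an RDTD(3, 4, 4), i.e. a GDD(3, 4, 16) of type 4^4 whose
derived design at every point is resolvable. -/

theorem stmt_12 : ∃ X Gs Bs, IsRDGDD 3 {4} 4 4 X Gs Bs := by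
  refine ⟨Finset.range 16, myGs, myBs, ⟨?_, ?_, ?_, ?_, ?_, ?_, ?_⟩, ?_⟩
  · decide
  · decide
  · decide
  · exact fun x hx => exu_of_filter (aux_gdd4 x hx)
  · intro b hb
    obtain ⟨h1, h2⟩ := aux_blocks b hb
    exact ⟨h1, by rw [Set.mem_singleton_iff]; exact h2⟩
  · decide
  · intro T hT h3 hgrp
    exact exu_of_filter (aux_gdd7 T (Finset.mem_powersetCard.mpr ⟨hT, h3⟩) hgrp)
  · intro x hx G hG hxG
    have hGe : G = grp (x/4) := aux_grpEq x hx G hG hxG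
    subst hGe
    refine ⟨4, fun c => pcls x c.val, ?_, ?_, ?_⟩
    · intro i
      obtain ⟨h1, h2⟩ := aux_pc x hx i.val (Finset.mem_range.mpr i.isLt)
      exact ⟨h1, fun y hy => exu_of_filter (h2 y hy)⟩
    · exact fun i => aux_sub x hx i.val (Finset.mem_range.mpr i.isLt)
    · exact fun b hb => exu_fin4 (aux_part x hx b hb)
end
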